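/- arXiv:1501.03027 — 9 statements merged into one kernel-verified Lean document; each statement's English description precedes it below -/
import Mathlib

section
/- Suppose the partial action (X,P,T) is directed. Then the relation on X defined by x ∼ y iff there exist m, n ∈ P with x ∈ U(m), y ∈ U(n) and x·m = y·n is an equivalence relation on X (reflexivity and symmetry are immediate; transitivity uses directedness). -/
/-- A (partial, right) action `(X, P, T)` of a monoid `P` on a set `X`:
domains `U m ⊆ X` and maps `x · m := act x m` (only meaningful on `U m`) such that
`U e = X`, `x · e = x`, `x ∈ U (m n) ↔ (x ∈ U m ∧ x·m ∈ U n)`, and in that case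
`(x·m)·n = x·(m n)`. -/
structure PartialAction (P : Type*) [Monoid P] (X : Type*) where
  U : P → Set X
  act : X → P → X
  U_one : U 1 = Set.univ
  act_one : ∀ x : X, act x 1 = x
  mem_U_mul : ∀ (x : X) (m n : P), x ∈ U (m * n) ↔ x ∈ U m ∧ act x m ∈ U n
  act_mul : ∀ (x : X) (m n : P), x ∈ U (m * n) → act (act x m) n = act x (m * n)

/-- `m ≤ n` in `P` iff `n = m·p` for some `p ∈ P`. -/
def pLe {P : Type*} [Monoid P] (m n : P) : Prop := ∃ p : P, n = m * p

/-- The partial action is directed: whenever `U m ∩ U n ≠ ∅` there is an upper bound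
`r` of `m` and `n` with `U m ∩ U n = U r`. -/
def PartialAction.IsDirectedAction {P : Type*} [Monoid P] {X : Type*}
    (A : PartialAction P X) : Prop :=
  ∀ m n : P, (A.U m ∩ A.U n).Nonempty →
    ∃ r : P, pLe m r ∧ pLe n r ∧ A.U m ∩ A.U n = A.U r

/-- if the partial action `(X,P,T)` is directed then the relation
`x ∼ y ↔ ∃ m n ∈ P, x ∈ U m, y ∈ U n, x·m = y·n` is an equivalence relation on `X`. -/
theorem stmt3 {P : Type*} [Monoid P] {X : Type*} (A : PartialAction P X)
    (hdir : A.IsDirectedAction) :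
    Equivalence (fun x y : X =>
      ∃ m n : P, x ∈ A.U m ∧ y ∈ A.U n ∧ A.act x m = A.act y n) := by
  constructor
  · intro x
    exact ⟨1, 1, by simp [A.U_one], by simp [A.U_one], rfl⟩
  · rintro x y ⟨m, n, hx, hy, h⟩
    exact ⟨n, m, hy, hx, h.symm⟩
  · rintro x y z ⟨m, n, hx, hy, h1⟩ ⟨p, q, hy', hz, h2⟩
    obtain ⟨r, ⟨a, ha⟩, ⟨b, hb⟩, hU⟩ := hdir n p ⟨y, hy, hy'⟩
    have hyr : y ∈ A.U r := hU ▸ ⟨hy, hy'⟩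
    have hyna : y ∈ A.U (n * a) := ha ▸ hyr
    have hypb : y ∈ A.U (p * b) := hb ▸ hyr
    have h3 : A.act y n ∈ A.U a := ((A.mem_U_mul y n a).mp hyna).2
    have h4 : A.act y p ∈ A.U b := ((A.mem_U_mul y p b).mp hypb).2
    have hxma : x ∈ A.U (m * a) := (A.mem_U_mul x m a).mpr ⟨hx, h1 ▸ h3⟩
    have hzqb : z ∈ A.U (q * b) := (A.mem_U_mul z q b).mpr ⟨hz, h2 ▸ h4⟩
    refine ⟨m * a, q * b, hxma, hzqb, ?_⟩
    calc A.act x (m * a) = A.act (A.act x m) a := (A.act_mul x m a hxma).symm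
      _ = A.act (A.act y n) a := by rw [h1]
      _ = A.act y (n * a) := A.act_mul y n a hyna
      _ = A.act y (p * b) := by rw [← ha, hb]
      _ = A.act (A.act y p) b := (A.act_mul y p b hypb).symm
      _ = A.act (A.act z q) b := by rw [h2]
      _ = A.act z (q * b) := A.act_mul z q b hzqb
end

section
/- Suppose the partial action (X,P,T) is directed and P is a submonoid of a group Q. Then the set G(X,P,T) = {(x,q,y) ∈ X × Q × X : ∃ m, n ∈ P, q = m·n⁻¹, x ∈ U(m), y ∈ U(n), x·m = y·n} is a subgroupoid of the trivial groupoid X × Q × X: (x,1,x) ∈ G(X,P,T) for every x ∈ X; if (x,q,y) ∈ G(X,P,T) then (y,q⁻¹,x) ∈ G(X,P,T); and if (x,s,y) ∈ G(X,P,T) and (y,t,z) ∈ G(X,P,T) then (x,s·t,z) ∈ G(X,P,T). -/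
/-- suppose the partial action `(X,P,T)` is directed and `P` is a
submonoid of a group `Q`.  Then
`G(X,P,T) = {(x,q,y) : ∃ m n ∈ P, q = m·n⁻¹, x ∈ U m, y ∈ U n, x·m = y·n}` is a
subgroupoid of the trivial groupoid `X × Q × X`: it contains `(x,1,x)` for all `x`,
is stable under the inverse `(x,q,y) ↦ (y,q⁻¹,x)` and under the product
`((x,s,y),(y,t,z)) ↦ (x,s·t,z)`. -/
theorem stmt4 {Q : Type*} [Group Q] (P : Submonoid Q) {X : Type*}
    (A : PartialAction P X) (hdir : A.IsDirectedAction) :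
    (∀ x : X, ((x, (1 : Q), x) : X × Q × X) ∈
        {g : X × Q × X | ∃ m n : P, g.2.1 = (m : Q) * (n : Q)⁻¹ ∧
          g.1 ∈ A.U m ∧ g.2.2 ∈ A.U n ∧ A.act g.1 m = A.act g.2.2 n}) ∧
    (∀ x y : X, ∀ q : Q, ((x, q, y) : X × Q × X) ∈
        {g : X × Q × X | ∃ m n : P, g.2.1 = (m : Q) * (n : Q)⁻¹ ∧
          g.1 ∈ A.U m ∧ g.2.2 ∈ A.U n ∧ A.act g.1 m = A.act g.2.2 n} →
      ((y, q⁻¹, x) : X × Q × X) ∈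
        {g : X × Q × X | ∃ m n : P, g.2.1 = (m : Q) * (n : Q)⁻¹ ∧
          g.1 ∈ A.U m ∧ g.2.2 ∈ A.U n ∧ A.act g.1 m = A.act g.2.2 n}) ∧
    (∀ x y z : X, ∀ s t : Q, ((x, s, y) : X × Q × X) ∈
        {g : X × Q × X | ∃ m n : P, g.2.1 = (m : Q) * (n : Q)⁻¹ ∧
          g.1 ∈ A.U m ∧ g.2.2 ∈ A.U n ∧ A.act g.1 m = A.act g.2.2 n} →
      ((y, t, z) : X × Q × X) ∈
        {g : X × Q × X | ∃ m n : P, g.2.1 = (m : Q) * (n : Q)⁻¹ ∧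
          g.1 ∈ A.U m ∧ g.2.2 ∈ A.U n ∧ A.act g.1 m = A.act g.2.2 n} →
      ((x, s * t, z) : X × Q × X) ∈
        {g : X × Q × X | ∃ m n : P, g.2.1 = (m : Q) * (n : Q)⁻¹ ∧
          g.1 ∈ A.U m ∧ g.2.2 ∈ A.U n ∧ A.act g.1 m = A.act g.2.2 n}) := by
  refine ⟨?_, ?_, ?_⟩
  · intro x
    refine ⟨1, 1, by simp, ?_, ?_, rfl⟩ <;> simp [A.U_one]
  · rintro x y q ⟨m, n, hq, hx, hy, hxy⟩
    dsimp only at hq hxy ⊢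
    exact ⟨n, m, by simp [hq], hy, hx, hxy.symm⟩
  · rintro x y z s t ⟨m, n, hs, hx, hy, hxy⟩ ⟨a, b, ht, hy', hz, hyz⟩
    dsimp only at hs hxy ht hyz ⊢
    obtain ⟨r, ⟨p, hp⟩, ⟨c, hc⟩, hU⟩ := hdir n a ⟨y, hy, hy'⟩
    have hyr : y ∈ A.U r := hU ▸ ⟨hy, hy'⟩
    -- y ∈ U (n*p), so y·n ∈ U p
    have hyn : A.act y n ∈ A.U p := ((A.mem_U_mul y n p).mp (hp ▸ hyr)).2
    have hya : A.act y a ∈ A.U c := ((A.mem_U_mul y a c).mp (hc ▸ hyr)).2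
    have hxmp : x ∈ A.U (m * p) := (A.mem_U_mul x m p).mpr ⟨hx, hxy ▸ hyn⟩
    have hzbc : z ∈ A.U (b * c) := (A.mem_U_mul z b c).mpr ⟨hz, hyz ▸ hya⟩
    refine ⟨m * p, b * c, ?_, hxmp, hzbc, ?_⟩
    · have hr : (n : Q) * p = (a : Q) * c := by
        have : ((n * p : P) : Q) = ((a * c : P) : Q) := by rw [← hp, ← hc]
        simpa using this
      have : (s : Q) * t = (m : Q) * ((n : Q)⁻¹ * a) * (b : Q)⁻¹ := by
        rw [hs, ht]; group
      rw [this]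
      have h2 : ((n : Q))⁻¹ * a = (p : Q) * (c : Q)⁻¹ := by
        rw [eq_mul_inv_iff_mul_eq, mul_assoc, ← hr, inv_mul_cancel_left]
      rw [h2]; push_cast; group
    · have h1 : A.act x (m * p) = A.act y r := by
        rw [← A.act_mul x m p hxmp, hxy, A.act_mul y n p (hp ▸ hyr), ← hp]
      have h2 : A.act z (b * c) = A.act y r := by
        rw [← A.act_mul z b c hzbc, ← hyz, A.act_mul y a c (hc ▸ hyr), ← hc]
      rw [h1, h2]
end

section
/- Assume additionally that X is a topological space, each U(m) is open in X, and each map T_m : U(m) → X is continuous, open onto its image, and locally injective (so each T_m is a local homeomorphism onto its image), and that the action is directed. For open subsets U, V ⊆ X and m, n ∈ P let Z(U,m,n,V) = {(x, m·n⁻¹, y) ∈ G(X,P,T) : x ∈ U ∩ U(m), y ∈ V ∩ U(n), x·m = y·n}. Then the family B of all such sets Z(U,m,n,V) is a base for a topology on G(X,P,T): B covers G(X,P,T), and for any two members Z₁, Z₂ of B and any point g ∈ Z₁ ∩ Z₂ there is a member Z₃ of B with g ∈ Z₃ ⊆ Z₁ ∩ Z₂. -/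
variable {Q : Type*} [Group Q] (P : Submonoid Q) {X : Type*}

/-- The semidirect product groupoid `G(X,P,T) ⊆ X × Q × X` of a partial action of a
submonoid `P` of a group `Q`. -/
def GSet (A : PartialAction P X) : Set (X × Q × X) :=
  {g : X × Q × X | ∃ m n : P, g.2.1 = (m : Q) * (n : Q)⁻¹ ∧
    g.1 ∈ A.U m ∧ g.2.2 ∈ A.U n ∧ A.act g.1 m = A.act g.2.2 n}

/-- The basic set `Z(U,m,n,V) = {(x, m n⁻¹, y) : x ∈ U ∩ U(m), y ∈ V ∩ U(n), x·m = y·n}`. -/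
def ZSet (A : PartialAction P X) (U : Set X) (m n : P) (V : Set X) : Set (X × Q × X) :=
  {g : X × Q × X | g.2.1 = (m : Q) * (n : Q)⁻¹ ∧
    g.1 ∈ U ∩ A.U m ∧ g.2.2 ∈ V ∩ A.U n ∧ A.act g.1 m = A.act g.2.2 n}

/-- assume `X` is a topological space, each `U m` is open, each
`T_m : U(m) → X` is continuous, open onto its image and locally injective, and the
action is directed.  Then the family `B` of the sets `Z(U,m,n,V)` (`U`, `V` open) is a
base for a topology on `G(X,P,T)`: it covers `G(X,P,T)`, and for any two members and
any point `g` in their intersection there is a member containing `g` and contained in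
the intersection. -/
theorem stmt5 [TopologicalSpace X] (A : PartialAction P X)
    (hopen : ∀ m : P, IsOpen (A.U m))
    (hcont : ∀ m : P, ContinuousOn (fun x => A.act x m) (A.U m))
    (hopenmap : ∀ (m : P) (V : Set X), IsOpen V → V ⊆ A.U m →
      IsOpen ((fun x => A.act x m) '' V))
    (hlocinj : ∀ (m : P), ∀ x ∈ A.U m, ∃ W : Set X, IsOpen W ∧ x ∈ W ∧
      Set.InjOn (fun x => A.act x m) (W ∩ A.U m))
    (hdir : A.IsDirectedAction) :
    (∀ g ∈ GSet P A, ∃ (U V : Set X) (m n : P),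
      IsOpen U ∧ IsOpen V ∧ g ∈ ZSet P A U m n V) ∧
    (∀ (U₁ V₁ U₂ V₂ : Set X) (m₁ n₁ m₂ n₂ : P),
      IsOpen U₁ → IsOpen V₁ → IsOpen U₂ → IsOpen V₂ →
      ∀ g ∈ ZSet P A U₁ m₁ n₁ V₁ ∩ ZSet P A U₂ m₂ n₂ V₂,
        ∃ (U₃ V₃ : Set X) (m₃ n₃ : P), IsOpen U₃ ∧ IsOpen V₃ ∧
          g ∈ ZSet P A U₃ m₃ n₃ V₃ ∧
          ZSet P A U₃ m₃ n₃ V₃ ⊆ ZSet P A U₁ m₁ n₁ V₁ ∩ ZSet P A U₂ m₂ n₂ V₂) := by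
  constructor
  · rintro ⟨x, q, y⟩ ⟨m, n, hq, hx, hy, hact⟩
    exact ⟨Set.univ, Set.univ, m, n, isOpen_univ, isOpen_univ, hq,
      ⟨Set.mem_univ _, hx⟩, ⟨Set.mem_univ _, hy⟩, hact⟩
  · rintro U₁ V₁ U₂ V₂ m₁ n₁ m₂ n₂ hU₁ hV₁ hU₂ hV₂ ⟨x, q, y⟩
      ⟨⟨hq₁, ⟨hxU₁, hxm₁⟩, ⟨hyV₁, hyn₁⟩, hact₁⟩, ⟨hq₂, ⟨hxU₂, hxm₂⟩, ⟨hyV₂, hyn₂⟩, hact₂⟩⟩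
    dsimp only at hq₁ hq₂ hxU₁ hxm₁ hyV₁ hyn₁ hact₁ hxU₂ hxm₂ hyV₂ hyn₂ hact₂
    obtain ⟨r, ⟨a, hra⟩, ⟨b, hrb⟩, hUr⟩ := hdir m₁ m₂ ⟨x, hxm₁, hxm₂⟩
    have hxr : x ∈ A.U r := hUr ▸ ⟨hxm₁, hxm₂⟩
    have hxm₁a : x ∈ A.U (m₁ * a) := hra ▸ hxr
    have hxm₂b : x ∈ A.U (m₂ * b) := hrb ▸ hxr
    have h1 : A.act x m₁ ∈ A.U a := ((A.mem_U_mul x m₁ a).1 hxm₁a).2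
    have h2 : A.act x m₂ ∈ A.U b := ((A.mem_U_mul x m₂ b).1 hxm₂b).2
    have hyn₁a : y ∈ A.U (n₁ * a) := (A.mem_U_mul y n₁ a).2 ⟨hyn₁, hact₁ ▸ h1⟩
    have hyn₂b : y ∈ A.U (n₂ * b) := (A.mem_U_mul y n₂ b).2 ⟨hyn₂, hact₂ ▸ h2⟩
    obtain ⟨s, ⟨c, hsc⟩, ⟨d, hsd⟩, hUs⟩ := hdir (n₁ * a) (n₂ * b) ⟨y, hyn₁a, hyn₂b⟩
    have hys : y ∈ A.U s := hUs ▸ ⟨hyn₁a, hyn₂b⟩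
    -- c = d
    have e1 : ((n₁ : Q) * a) * c = ((n₂ : Q) * b) * d := by
      have := congrArg (fun t : P => (t : Q)) (hsc.symm.trans hsd)
      push_cast at this; exact this
    have e2 : ((m₁ : Q) * a) = (m₂ : Q) * b := by
      have := congrArg (fun t : P => (t : Q)) (hra.symm.trans hrb)
      push_cast at this; exact this
    have e3 : (m₁ : Q) * (n₁ : Q)⁻¹ = (m₂ : Q) * (n₂ : Q)⁻¹ := hq₁.symm.trans hq₂
    have hcdQ : (c : Q) = (d : Q) := by
      have key : (m₁ : Q) * a * c = (m₁ : Q) * a * d := by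
        calc (m₁ : Q) * a * c = ((m₁ : Q) * (n₁ : Q)⁻¹) * (((n₁ : Q) * a) * c) := by group
          _ = ((m₂ : Q) * (n₂ : Q)⁻¹) * (((n₂ : Q) * b) * d) := by rw [e3, e1]
          _ = ((m₂ : Q) * b) * d := by group
          _ = (m₁ : Q) * a * d := by rw [← e2]
      exact mul_left_cancel key
    have hcd : c = d := Subtype.ext hcdQ
    have hsd' : s = (n₂ * b) * c := by rw [hcd]; exact hsd
    -- x ∈ U((m₁*a)*c) and actions agree
    have hysc : A.act y (n₁ * a) ∈ A.U c := ((A.mem_U_mul y (n₁ * a) c).1 (hsc ▸ hys)).2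
    have hxy_ra : A.act x (m₁ * a) = A.act y (n₁ * a) := by
      rw [← A.act_mul x m₁ a hxm₁a, ← A.act_mul y n₁ a hyn₁a, hact₁]
    have hxm₃ : x ∈ A.U ((m₁ * a) * c) :=
      (A.mem_U_mul x (m₁ * a) c).2 ⟨hxm₁a, hxy_ra.symm ▸ hysc⟩
    have hm₃' : (m₁ * a) * c = (m₂ * b) * c := by rw [← hra, hrb]
    have hact₃ : A.act x ((m₁ * a) * c) = A.act y s := by
      rw [← A.act_mul x (m₁ * a) c hxm₃, hxy_ra, A.act_mul y (n₁ * a) c (hsc ▸ hys), ← hsc]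
    -- q = m₃ * s⁻¹
    have hq₃ : q = (((m₁ * a) * c : P) : Q) * (((s : P) : Q))⁻¹ := by
      rw [hq₁, hsc]; push_cast; group
    -- local injectivity data
    have hz₁ : A.act x m₁ ∈ A.U (a * c) :=
      ((A.mem_U_mul x m₁ (a * c)).1 (mul_assoc m₁ a c ▸ hxm₃)).2
    have hz₂ : A.act x m₂ ∈ A.U (b * c) :=
      ((A.mem_U_mul x m₂ (b * c)).1 (mul_assoc m₂ b c ▸ (hm₃' ▸ hxm₃))).2
    obtain ⟨W₁, hW₁open, hzW₁, hinj₁⟩ := hlocinj (a * c) (A.act x m₁) hz₁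
    obtain ⟨W₂, hW₂open, hzW₂, hinj₂⟩ := hlocinj (b * c) (A.act x m₂) hz₂
    refine ⟨(U₁ ∩ U₂) ∩ ((A.U m₁ ∩ (fun t => A.act t m₁) ⁻¹' W₁) ∩
        (A.U m₂ ∩ (fun t => A.act t m₂) ⁻¹' W₂)),
      (V₁ ∩ V₂) ∩ ((A.U n₁ ∩ (fun t => A.act t n₁) ⁻¹' W₁) ∩
        (A.U n₂ ∩ (fun t => A.act t n₂) ⁻¹' W₂)),
      (m₁ * a) * c, s, ?_, ?_, ?_, ?_⟩
    · exact (hU₁.inter hU₂).inter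
        (((hcont m₁).isOpen_inter_preimage (hopen m₁) hW₁open).inter
          ((hcont m₂).isOpen_inter_preimage (hopen m₂) hW₂open))
    · exact (hV₁.inter hV₂).inter
        (((hcont n₁).isOpen_inter_preimage (hopen n₁) hW₁open).inter
          ((hcont n₂).isOpen_inter_preimage (hopen n₂) hW₂open))
    · exact ⟨hq₃, ⟨⟨⟨hxU₁, hxU₂⟩, ⟨hxm₁, hzW₁⟩, ⟨hxm₂, hzW₂⟩⟩, hxm₃⟩,
        ⟨⟨⟨hyV₁, hyV₂⟩, ⟨hyn₁, (hact₁ ▸ hzW₁ : A.act y n₁ ∈ W₁)⟩, ⟨hyn₂, (hact₂ ▸ hzW₂ : A.act y n₂ ∈ W₂)⟩⟩, hys⟩, hact₃⟩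
    · rintro ⟨x', q', y'⟩
        ⟨hq', ⟨⟨⟨hx'U₁, hx'U₂⟩, ⟨hx'm₁, hx'W₁⟩, ⟨hx'm₂, hx'W₂⟩⟩, hx'm₃⟩,
          ⟨⟨⟨hy'V₁, hy'V₂⟩, ⟨hy'n₁, hy'W₁⟩, ⟨hy'n₂, hy'W₂⟩⟩, hy's⟩, hact'⟩
      dsimp only at hq' hx'm₃ hx'U₁ hx'U₂ hx'm₁ hx'W₁ hx'm₂ hx'W₂ hact' hy's hy'V₁ hy'V₂ hy'n₁ hy'W₁ hy'n₂ hy'W₂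
      have hx'm₁ac : x' ∈ A.U (m₁ * (a * c)) := mul_assoc m₁ a c ▸ hx'm₃
      have hy'n₁ac : y' ∈ A.U (n₁ * (a * c)) := mul_assoc n₁ a c ▸ (hsc ▸ hy's)
      have hx'm₂bc : x' ∈ A.U (m₂ * (b * c)) := mul_assoc m₂ b c ▸ (hm₃' ▸ hx'm₃)
      have hy'n₂bc : y' ∈ A.U (n₂ * (b * c)) := mul_assoc n₂ b c ▸ (hsd' ▸ hy's)
      have hT₁ : A.act (A.act x' m₁) (a * c) = A.act (A.act y' n₁) (a * c) := by
        rw [A.act_mul x' m₁ (a * c) hx'm₁ac, A.act_mul y' n₁ (a * c) hy'n₁ac,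
          ← mul_assoc, ← mul_assoc, ← hsc]
        exact hact'
      have hT₂ : A.act (A.act x' m₂) (b * c) = A.act (A.act y' n₂) (b * c) := by
        rw [A.act_mul x' m₂ (b * c) hx'm₂bc, A.act_mul y' n₂ (b * c) hy'n₂bc,
          ← mul_assoc, ← mul_assoc, ← hsd', ← hm₃']
        exact hact'
      have hfin₁ : A.act x' m₁ = A.act y' n₁ :=
        hinj₁ ⟨hx'W₁, ((A.mem_U_mul x' m₁ (a * c)).1 hx'm₁ac).2⟩
          ⟨hy'W₁, ((A.mem_U_mul y' n₁ (a * c)).1 hy'n₁ac).2⟩ hT₁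
      have hfin₂ : A.act x' m₂ = A.act y' n₂ :=
        hinj₂ ⟨hx'W₂, ((A.mem_U_mul x' m₂ (b * c)).1 hx'm₂bc).2⟩
          ⟨hy'W₂, ((A.mem_U_mul y' n₂ (b * c)).1 hy'n₂bc).2⟩ hT₂
      have hq'₁ : q' = (m₁ : Q) * (n₁ : Q)⁻¹ := by rw [hq', ← hq₃, hq₁]
      have hq'₂ : q' = (m₂ : Q) * (n₂ : Q)⁻¹ := by rw [hq', ← hq₃, hq₂]
      exact ⟨⟨hq'₁, ⟨hx'U₁, hx'm₁⟩, ⟨hy'V₁, hy'n₁⟩, hfin₁⟩,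
        ⟨hq'₂, ⟨hx'U₂, hx'm₂⟩, ⟨hy'V₂, hy'n₂⟩, hfin₂⟩⟩
end

section
/- Suppose the partial action (X,P,T) is directed. Let 𝓕 be the collection of finite subsets F of P such that ⋂_{n ∈ F} U(n) ≠ ∅, with the convention that the empty intersection is X (so ∅ ∈ 𝓕 and every singleton is in 𝓕). Then there is a map F ↦ r_F from 𝓕 to P such that r_∅ = e, r_{ {n} } = n for every n ∈ P, and for all F ∈ 𝓕: (a) n ≤ r_F for every n ∈ F; (b) U(r_F) = ⋂_{n ∈ F} U(n); and (c) if F' ⊆ F (so F' ∈ 𝓕) then r_{F'} ≤ r_F. -/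
section Aux
variable {P : Type*} [Monoid P] {X : Type*}

theorem pLe_refl' (m : P) : pLe m m := ⟨1, (mul_one m).symm⟩

theorem pLe_trans' {a b c : P} (h1 : pLe a b) (h2 : pLe b c) : pLe a c := by
  obtain ⟨p, rfl⟩ := h1; obtain ⟨q, rfl⟩ := h2; exact ⟨p * q, mul_assoc _ _ _⟩

theorem one_pLe' (m : P) : pLe 1 m := ⟨m, (one_mul m).symm⟩

theorem biInter_anti' (A : PartialAction P X) {F' F : Finset P} (h : F' ⊆ F) :
    (⋂ n ∈ F, A.U n) ⊆ ⋂ n ∈ F', A.U n := by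
  intro x hx
  simp only [Set.mem_iInter] at *
  exact fun n hn => hx n (h hn)

theorem base_lemma' (A : PartialAction P X) (hdir : A.IsDirectedAction) (F : Finset P) :
    (⋂ n ∈ F, A.U n).Nonempty → ∃ s, A.U s = (⋂ n ∈ F, A.U n) ∧ ∀ n ∈ F, pLe n s := by
  classical
  induction F using Finset.induction with
  | empty => intro _; exact ⟨1, by simp [A.U_one], by simp⟩
  | @insert a F ha ih =>
    intro hne
    rw [Finset.set_biInter_insert] at hne ⊢
    obtain ⟨s0, hs0, hs0F⟩ := ih (hne.mono Set.inter_subset_right)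
    have h2 : (A.U a ∩ A.U s0).Nonempty := by rw [hs0]; exact hne
    obtain ⟨r, har, hsr, hUr⟩ := hdir a s0 h2
    refine ⟨r, by rw [← hUr, hs0], ?_⟩
    intro n hn
    rcases Finset.mem_insert.1 hn with rfl | hn
    · exact har
    · exact pLe_trans' (hs0F n hn) hsr

theorem chain_lemma' (A : PartialAction P X) (hdir : A.IsDirectedAction) (S : Set X)
    (hS : S.Nonempty) : ∀ (L : List P), (∀ m ∈ L, S ⊆ A.U m) → ∀ s0, A.U s0 = S →
    ∃ s, A.U s = S ∧ pLe s0 s ∧ ∀ m ∈ L, pLe m s := by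
  intro L
  induction L with
  | nil => intro _ s0 h0; exact ⟨s0, h0, pLe_refl' s0, by simp⟩
  | cons m L ih =>
    intro hL s0 h0
    have hsub : A.U s0 ⊆ A.U m := h0 ▸ hL m List.mem_cons_self
    have h2 : (A.U m ∩ A.U s0).Nonempty := by
      rw [Set.inter_eq_self_of_subset_right hsub, h0]; exact hS
    obtain ⟨t, hmt, hst, hUt⟩ := hdir m s0 h2
    have hUt' : A.U t = S := by
      rw [← hUt, Set.inter_eq_self_of_subset_right hsub, h0]
    obtain ⟨s, hsU, hts, hLs⟩ := ih (fun x hx => hL x (List.mem_cons_of_mem m hx)) t hUt'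
    refine ⟨s, hsU, pLe_trans' hst hts, ?_⟩
    intro x hx
    rcases List.mem_cons.1 hx with rfl | hx
    · exact pLe_trans' hmt hts
    · exact hLs x hx

theorem exists_spec' (A : PartialAction P X) (hdir : A.IsDirectedAction) (F : Finset P)
    (hne : (⋂ n ∈ F, A.U n).Nonempty) (vals : Finset P → P) :
    ∃ s, A.U s = (⋂ n ∈ F, A.U n) ∧ (∀ n ∈ F, pLe n s) ∧
      ∀ F' : Finset P, F' ⊂ F → A.U (vals F') = (⋂ n ∈ F', A.U n) → pLe (vals F') s := by
  classical
  obtain ⟨s0, hs0, hs0F⟩ := base_lemma' A hdir F hne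
  set S := ⋂ n ∈ F, A.U n with hSdef
  set T := F.powerset.filter (fun G => A.U (vals G) = ⋂ n ∈ G, A.U n) with hTdef
  set L := T.toList.map vals with hLdef
  have hL : ∀ m ∈ L, S ⊆ A.U m := by
    intro m hm
    simp only [hLdef, List.mem_map, Finset.mem_toList, hTdef, Finset.mem_filter,
      Finset.mem_powerset] at hm
    obtain ⟨G, ⟨hGF, hGU⟩, rfl⟩ := hm
    rw [hGU]
    exact biInter_anti' A hGF
  obtain ⟨s, hsU, hs0s, hLs⟩ := chain_lemma' A hdir S hne L hL s0 hs0
  refine ⟨s, hsU, fun n hn => pLe_trans' (hs0F n hn) hs0s, ?_⟩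
  intro F' hF' hU
  refine hLs (vals F') ?_
  simp only [hLdef, List.mem_map, Finset.mem_toList]
  exact ⟨F', Finset.mem_filter.2 ⟨Finset.mem_powerset.2 hF'.subset, hU⟩, rfl⟩

open Classical in
noncomputable def rfun' (A : PartialAction P X) (hdir : A.IsDirectedAction) : Finset P → P :=
  Finset.strongInduction (fun F ih =>
    if hE : F = ∅ then 1
    else if h1 : ∃ a : P, F = {a} then h1.choose
    else if hne : (⋂ n ∈ F, A.U n).Nonempty then
      (exists_spec' A hdir F hne (fun G => if hG : G ⊂ F then ih G hG else 1)).choose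
    else 1)

open Classical in
theorem rfun'_eq (A : PartialAction P X) (hdir : A.IsDirectedAction) (F : Finset P) :
    rfun' A hdir F =
    if hE : F = ∅ then 1
    else if h1 : ∃ a : P, F = {a} then h1.choose
    else if hne : (⋂ n ∈ F, A.U n).Nonempty then
      (exists_spec' A hdir F hne (fun G => if hG : G ⊂ F then rfun' A hdir G else 1)).choose
    else 1 := by
  rw [rfun', Finset.strongInduction_eq]

theorem rfun'_empty (A : PartialAction P X) (hdir : A.IsDirectedAction) :
    rfun' A hdir ∅ = 1 := by
  rw [rfun'_eq]; simp

theorem rfun'_singleton (A : PartialAction P X) (hdir : A.IsDirectedAction) (n : P) :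
    rfun' A hdir {n} = n := by
  rw [rfun'_eq]
  have hE : ({n} : Finset P) ≠ ∅ := Finset.singleton_ne_empty n
  have h1 : ∃ a : P, ({n} : Finset P) = {a} := ⟨n, rfl⟩
  rw [dif_neg hE, dif_pos h1]
  exact (Finset.singleton_injective h1.choose_spec).symm
end Aux

theorem rfun'_main {P : Type*} [Monoid P] {X : Type*} (A : PartialAction P X)
    (hdir : A.IsDirectedAction) :
    ∀ F : Finset P, (⋂ n ∈ F, A.U n).Nonempty →
      (∀ n ∈ F, pLe n (rfun' A hdir F)) ∧
      A.U (rfun' A hdir F) = (⋂ n ∈ F, A.U n) ∧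
      (∀ F' : Finset P, F' ⊆ F → pLe (rfun' A hdir F') (rfun' A hdir F)) := by
  classical
  refine Finset.strongInduction ?_
  intro F ih hne
  by_cases hE : F = ∅
  · subst hE
    rw [rfun'_empty]
    refine ⟨by simp, by simp [A.U_one], ?_⟩
    intro F' hF'
    rw [Finset.subset_empty.1 hF', rfun'_empty]
    exact pLe_refl' 1
  · by_cases h1 : ∃ a : P, F = {a}
    · obtain ⟨a, rfl⟩ := h1
      rw [rfun'_singleton]
      refine ⟨?_, by simp, ?_⟩
      · intro n hn
        rw [Finset.mem_singleton.1 hn]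
        exact pLe_refl' a
      · intro F' hF'
        rcases Finset.subset_singleton_iff.1 hF' with rfl | rfl
        · rw [rfun'_empty]; exact one_pLe' a
        · rw [rfun'_singleton]; exact pLe_refl' a
    · have hkey : rfun' A hdir F =
          (exists_spec' A hdir F hne
            (fun G => if hG : G ⊂ F then rfun' A hdir G else 1)).choose := by
        rw [rfun'_eq, dif_neg hE, dif_neg h1, dif_pos hne]
      obtain ⟨hU, hF, hsub⟩ := (exists_spec' A hdir F hne
        (fun G => if hG : G ⊂ F then rfun' A hdir G else 1)).choose_spec
      rw [hkey]
      refine ⟨hF, hU, ?_⟩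
      intro F' hF'
      rcases eq_or_ne F' F with rfl | hne2
      · rw [← hkey]; exact pLe_refl' _
      · have hss : F' ⊂ F := lt_of_le_of_ne hF' hne2
        have hne' : (⋂ n ∈ F', A.U n).Nonempty := hne.mono (biInter_anti' A hss.subset)
        have hU' := (ih F' hss hne').2.1
        have := hsub F' hss (by rw [dif_pos hss]; exact hU')
        rwa [dif_pos hss] at this
/-- suppose the partial action `(X,P,T)` is directed.  Let `𝓕` be the
collection of finite `F ⊆ P` with `⋂_{n ∈ F} U n ≠ ∅` (the empty intersection being
`X`).  There is a map `F ↦ r_F` into `P` with `r_∅ = e`, `r_{{n}} = n` for every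
`n ∈ P`, and for all `F ∈ 𝓕`: (a) `n ≤ r_F` for every `n ∈ F`;
(b) `U (r_F) = ⋂_{n ∈ F} U n`; (c) if `F' ⊆ F` then `r_{F'} ≤ r_F`. -/
theorem stmt7 {P : Type*} [Monoid P] {X : Type*} (A : PartialAction P X)
    (hdir : A.IsDirectedAction) :
    ∃ r : Finset P → P,
      r ∅ = 1 ∧
      (∀ n : P, r {n} = n) ∧
      ∀ F : Finset P, (⋂ n ∈ F, A.U n).Nonempty →
        (∀ n ∈ F, pLe n (r F)) ∧
        A.U (r F) = (⋂ n ∈ F, A.U n) ∧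
        (∀ F' : Finset P, F' ⊆ F → pLe (r F') (r F)) :=
  ⟨rfun' A hdir, rfun'_empty A hdir, rfun'_singleton A hdir, rfun'_main A hdir⟩
end

section
/- Let A be a set of morphisms of a P-graph Λ and n ∈ P, and define A·n = {ν : ∃ μ with d(μ) = n such that μν ∈ A}. If A is hereditary, then A·n is hereditary; if A is hereditary and directed, then A·n is directed. -/
open CategoryTheory

/-- A `P`-graph: a small category `Λ` with a degree functor `d` into a submonoid `P`
of a group `Q`, satisfying `d (f ≫ g) = d f * d g`, `d (𝟙 x) = 1`, and the unique
factorization property. -/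
structure PGraph {Q : Type*} [Group Q] (P : Submonoid Q) (Λ : Type*) [Category Λ] where
  d : ∀ {x y : Λ}, (x ⟶ y) → Q
  d_mem : ∀ {x y : Λ} (f : x ⟶ y), d f ∈ P
  d_comp : ∀ {x y z : Λ} (f : x ⟶ y) (g : y ⟶ z), d (f ≫ g) = d f * d g
  d_id : ∀ x : Λ, d (𝟙 x) = 1
  factor : ∀ {x z : Λ} (l : x ⟶ z) (m n : Q), m ∈ P → n ∈ P → d l = m * n →
    ∃! p : Σ y : Λ, (x ⟶ y) × (y ⟶ z),
      d p.2.1 = m ∧ d p.2.2 = n ∧ p.2.1 ≫ p.2.2 = l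

/-- The prefix order on the morphisms of `Λ` (packaged as triples
`⟨source, target, morphism⟩`): `μ ≤ λ` iff there is `ν` with `λ = μ ≫ ν`. -/
def prefixLe {Λ : Type*} [Category Λ] (f g : Σ x y : Λ, x ⟶ y) : Prop :=
  ∃ (z : Λ) (ν : f.2.1 ⟶ z), g = ⟨f.1, z, f.2.2 ≫ ν⟩

/-- A set `A` of morphisms is hereditary if `μ ≤ λ ∈ A` implies `μ ∈ A`. -/
def Hereditary {Λ : Type*} [Category Λ] (A : Set (Σ x y : Λ, x ⟶ y)) : Prop :=
  ∀ f g : Σ x y : Λ, x ⟶ y, prefixLe f g → g ∈ A → f ∈ A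

/-- A set `A` of morphisms is directed if any two of its elements have a common upper
bound (for the prefix order) lying in `A`. -/
def DirectedSet {Λ : Type*} [Category Λ] (A : Set (Σ x y : Λ, x ⟶ y)) : Prop :=
  ∀ f ∈ A, ∀ g ∈ A, ∃ h ∈ A, prefixLe f h ∧ prefixLe g h

/-- `A·n = {ν : ∃ μ with d μ = n and μν ∈ A}`. -/
def shiftSet {Q : Type*} [Group Q] {P : Submonoid Q} {Λ : Type*} [Category Λ]
    (G : PGraph P Λ) (A : Set (Σ x y : Λ, x ⟶ y)) (n : Q) : Set (Σ x y : Λ, x ⟶ y) :=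
  {g : Σ x y : Λ, x ⟶ y | ∃ (w : Λ) (μ : w ⟶ g.1),
    G.d μ = n ∧ (⟨w, g.2.1, μ ≫ g.2.2⟩ : Σ x y : Λ, x ⟶ y) ∈ A}

/-- for a set `A` of morphisms of a `P`-graph and `n ∈ P`: if `A` is
hereditary then `A·n` is hereditary, and if `A` is hereditary and directed then `A·n`
is directed. -/
theorem stmt13 {Q : Type*} [Group Q] (P : Submonoid Q) {Λ : Type*} [SmallCategory Λ]
    (G : PGraph P Λ) (A : Set (Σ x y : Λ, x ⟶ y)) (n : Q) (hn : n ∈ P) :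
    (Hereditary A → Hereditary (shiftSet G A n)) ∧
    (Hereditary A → DirectedSet A → DirectedSet (shiftSet G A n)) := by
  constructor
  · rintro hA ⟨x, y, φ⟩ gg ⟨z, ν, rfl⟩ ⟨w, μ, hdμ, hμA⟩
    exact ⟨w, μ, hdμ, hA ⟨w, y, μ ≫ φ⟩ ⟨w, z, μ ≫ (φ ≫ ν)⟩
      ⟨z, ν, by simp⟩ (by simpa using hμA)⟩
  · rintro hA hD ⟨x₁, y₁, φ⟩ ⟨w₁, μ₁, hd₁, h₁A⟩ ⟨x₂, y₂, ψ⟩ ⟨w₂, μ₂, hd₂, h₂A⟩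
    obtain ⟨h, hhA, ⟨z₁, ν₁, hh₁⟩, ⟨z₂, ν₂, hh₂⟩⟩ := hD _ h₁A _ h₂A
    subst hh₁
    obtain ⟨rfl, h2⟩ := Sigma.mk.inj_iff.mp hh₂
    obtain ⟨rfl, h3⟩ := Sigma.mk.inj_iff.mp (eq_of_heq h2)
    replace h3 : (μ₁ ≫ φ) ≫ ν₁ = (μ₂ ≫ ψ) ≫ ν₂ := eq_of_heq h3
    -- apply unique factorization
    obtain ⟨p, hp, hu⟩ := G.factor ((μ₁ ≫ φ) ≫ ν₁) n (G.d (φ ≫ ν₁)) hn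
      (G.d_mem _) (by rw [Category.assoc, G.d_comp, hd₁])
    have hdeq : G.d (ψ ≫ ν₂) = G.d (φ ≫ ν₁) := by
      have key : n * G.d (φ ≫ ν₁) = n * G.d (ψ ≫ ν₂) := by
        have a1 : G.d ((μ₁ ≫ φ) ≫ ν₁) = n * G.d (φ ≫ ν₁) := by
          rw [Category.assoc, G.d_comp, hd₁]
        have a2 : G.d ((μ₂ ≫ ψ) ≫ ν₂) = n * G.d (ψ ≫ ν₂) := by
          rw [Category.assoc, G.d_comp, hd₂]
        rw [← a1, ← a2, h3]
      exact (mul_left_cancel key).symm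
    have e1 : (⟨x₁, μ₁, φ ≫ ν₁⟩ : Σ y : Λ, (w₁ ⟶ y) × (y ⟶ z₁)) = p :=
      hu _ ⟨hd₁, rfl, by rw [Category.assoc]⟩
    have e2 : (⟨x₂, μ₂, ψ ≫ ν₂⟩ : Σ y : Λ, (w₁ ⟶ y) × (y ⟶ z₁)) = p :=
      hu _ ⟨hd₂, hdeq, by simp only [← Category.assoc]; exact h3.symm⟩
    have e := e1.trans e2.symm
    obtain ⟨rfl, e'⟩ := Sigma.mk.inj_iff.mp e
    obtain ⟨eμ, eφ⟩ := Prod.mk.inj (eq_of_heq e')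
    refine ⟨⟨x₁, z₁, φ ≫ ν₁⟩, ⟨w₁, μ₁, hd₁, by simpa using hhA⟩,
      ⟨z₁, ν₁, rfl⟩, ⟨z₁, ν₂, ?_⟩⟩
    simp [eφ]
end

section
/- Let A be a hereditary and directed set of morphisms of a P-graph Λ and let n ∈ P be such that A·n ≠ ∅. Then there is a unique morphism μ ∈ A with d(μ) = n, and for this μ one has A = μ(A·n), where μB := {λ : ∃ ν ∈ B composable with μ, λ ≤ μν}. -/
open CategoryTheory

/-- `μB = {λ : ∃ ν ∈ B composable with μ, λ ≤ μν}`. -/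
def mulSet {Λ : Type*} [Category Λ] (μ : Σ x y : Λ, x ⟶ y)
    (B : Set (Σ x y : Λ, x ⟶ y)) : Set (Σ x y : Λ, x ⟶ y) :=
  {f : Σ x y : Λ, x ⟶ y | ∃ (z : Λ) (ν : μ.2.1 ⟶ z),
    (⟨μ.2.1, z, ν⟩ : Σ x y : Λ, x ⟶ y) ∈ B ∧
    prefixLe f ⟨μ.1, z, μ.2.2 ≫ ν⟩}

/-- let `A` be a hereditary and directed set of morphisms of a `P`-graph
and `n ∈ P` with `A·n ≠ ∅`.  Then there is a unique morphism `μ ∈ A` with `d μ = n`,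
and for this `μ` one has `A = μ(A·n)`. -/
theorem stmt14 {Q : Type*} [Group Q] (P : Submonoid Q) {Λ : Type*} [SmallCategory Λ]
    (G : PGraph P Λ) (A : Set (Σ x y : Λ, x ⟶ y))
    (hher : Hereditary A) (hdir : DirectedSet A)
    (n : Q) (hn : n ∈ P) (hne : (shiftSet G A n).Nonempty) :
    ∃ μ : Σ x y : Λ, x ⟶ y,
      (μ ∈ A ∧ G.d μ.2.2 = n) ∧
      (∀ μ' : Σ x y : Λ, x ⟶ y, μ' ∈ A → G.d μ'.2.2 = n → μ' = μ) ∧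
      A = mulSet μ (shiftSet G A n) := by
  -- uniqueness of elements of A of degree n
  have uniq : ∀ f ∈ A, ∀ g ∈ A, G.d f.2.2 = n → G.d g.2.2 = n → f = g := by
    rintro ⟨a, b, φ⟩ hf ⟨a', b', ψ⟩ hg hdf hdg
    obtain ⟨h, hh, ⟨z1, ν1, rfl⟩, ⟨z2, ν2, hg2⟩⟩ := hdir _ hf _ hg
    simp only at hg2
    obtain ⟨rfl, hg2⟩ := Sigma.mk.inj_iff.mp hg2
    rw [heq_eq_eq] at hg2
    obtain ⟨rfl, hg2⟩ := Sigma.mk.inj_iff.mp hg2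
    rw [heq_eq_eq] at hg2
    have hdl : G.d (φ ≫ ν1) = n * G.d ν1 := by rw [G.d_comp, hdf]
    obtain ⟨p, -, hpu⟩ := G.factor (φ ≫ ν1) n (G.d ν1) hn (G.d_mem ν1) hdl
    have h1 : (⟨b, φ, ν1⟩ : Σ y : Λ, (a ⟶ y) × (y ⟶ z1)) = p :=
      hpu _ ⟨hdf, rfl, rfl⟩
    have hdν2 : G.d ν2 = G.d ν1 := by
      dsimp only at hdf hdg
      have : n * G.d ν2 = n * G.d ν1 := by
        calc n * G.d ν2 = G.d (ψ ≫ ν2) := by rw [G.d_comp, hdg]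
          _ = G.d (φ ≫ ν1) := by rw [hg2]
          _ = n * G.d ν1 := by rw [G.d_comp, hdf]
      exact mul_left_cancel this
    have h2 : (⟨b', ψ, ν2⟩ : Σ y : Λ, (a ⟶ y) × (y ⟶ z1)) = p :=
      hpu _ ⟨hdg, hdν2, hg2.symm⟩
    have e := h1.trans h2.symm
    obtain ⟨rfl, e2⟩ := Sigma.mk.inj_iff.mp e
    rw [heq_eq_eq, Prod.mk.injEq] at e2
    obtain ⟨rfl, -⟩ := e2
    rfl
  -- existence via nonemptiness of A·n
  obtain ⟨g, w, μ, hdμ, hA⟩ := hne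
  have hμ0 : (⟨w, g.1, μ⟩ : Σ x y : Λ, x ⟶ y) ∈ A :=
    hher _ _ ⟨g.2.1, g.2.2, rfl⟩ hA
  refine ⟨⟨w, g.1, μ⟩, ⟨hμ0, hdμ⟩, fun μ' hμ' hdμ' => uniq _ hμ' _ hμ0 hdμ' hdμ, ?_⟩
  ext f
  constructor
  · intro hf
    obtain ⟨h, hh, hfh, z, ν, rfl⟩ := hdir _ hf _ hμ0
    exact ⟨z, ν, ⟨w, μ, hdμ, hh⟩, hfh⟩
  · rintro ⟨z, ν, ⟨w', μ', hdμ', hA'⟩, hle⟩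
    have hμ'A : (⟨w', g.1, μ'⟩ : Σ x y : Λ, x ⟶ y) ∈ A :=
      hher _ _ ⟨z, ν, rfl⟩ hA'
    have e : (⟨w', g.1, μ'⟩ : Σ x y : Λ, x ⟶ y) = ⟨w, g.1, μ⟩ :=
      uniq _ hμ'A _ hμ0 hdμ' hdμ
    obtain ⟨rfl, e2⟩ := Sigma.mk.inj_iff.mp e
    rw [heq_eq_eq] at e2
    obtain ⟨-, e2⟩ := Sigma.mk.inj_iff.mp e2
    rw [heq_eq_eq] at e2
    rw [e2] at hA'
    exact hher _ _ hle hA'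
end

section
/- Let P be a quasi-lattice ordered submonoid of a group Q. Then the set of all A : P → Bool such that {p ∈ P : A(p) = true} is hereditary (p ≤ q and A(q) = true imply A(p) = true) and directed (A(p) = A(q) = true implies there is r with A(r) = true, p ≤ r and q ≤ r) is a closed subset of the space P → Bool equipped with the product topology (Bool discrete). (This is the discrete case, Λ = P, of the statement that the set of closed hereditary directed subsets of a P-graph is closed in the Fell topology; it is Nica's description of the Wiener–Hopf compactification.) -/
/-- let `P` be a quasi-lattice ordered submonoid of a group `Q`
(`P ∩ P⁻¹ = {1}`, and any two elements of `P` with a common upper bound for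
`p ≤ q ↔ ∃ s ∈ P, q = p s` have a least upper bound).  Then the set of `A : P → Bool`
whose support `{p : A p = true}` is hereditary and directed is closed in `P → Bool`
with the product topology (`Bool` discrete). -/
theorem stmt17 {Q : Type*} [Group Q] (P : Submonoid Q)
    (hQL1 : ∀ q : Q, q ∈ P → q⁻¹ ∈ P → q = 1)
    (hQL2 : ∀ p q : P, (∃ u : P, (∃ s : P, u = p * s) ∧ (∃ s : P, u = q * s)) →
      ∃ l : P, (∃ s : P, l = p * s) ∧ (∃ s : P, l = q * s) ∧
        ∀ u : P, (∃ s : P, u = p * s) → (∃ s : P, u = q * s) → ∃ s : P, u = l * s) :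
    IsClosed {A : P → Bool |
      (∀ p q : P, (∃ s : P, q = p * s) → A q = true → A p = true) ∧
      (∀ p q : P, A p = true → A q = true →
        ∃ r : P, A r = true ∧ (∃ s : P, r = p * s) ∧ (∃ s : P, r = q * s))} := by
  refine isClosed_of_closure_subset fun A hA => ?_
  rw [mem_closure_iff] at hA
  have hopen : ∀ p : P, IsOpen {B : P → Bool | B p = A p} :=
    fun p => by
    have : {B : P → Bool | B p = A p} = (fun B : P → Bool => B p) ⁻¹' {A p} := rfl
    rw [this]; exact (isOpen_discrete _).preimage (continuous_apply p)
  constructor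
  · intro p q hs hq
    obtain ⟨B, hBo, hBs⟩ := hA ({B : P → Bool | B p = A p} ∩ {B | B q = A q})
      ((hopen p).inter (hopen q)) ⟨rfl, rfl⟩
    have hBp := hBs.1 p q hs (by rw [hBo.2]; exact hq)
    rw [hBo.1] at hBp; exact hBp
  · intro p q hp hq
    -- first get existence of a common upper bound
    obtain ⟨B, hBo, hBs⟩ := hA ({B : P → Bool | B p = A p} ∩ {B | B q = A q})
      ((hopen p).inter (hopen q)) ⟨rfl, rfl⟩
    obtain ⟨r, _, hpr, hqr⟩ := hBs.2 p q (by rw [hBo.1]; exact hp) (by rw [hBo.2]; exact hq)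
    obtain ⟨l, hpl, hql, hlub⟩ := hQL2 p q ⟨r, hpr, hqr⟩
    refine ⟨l, ?_, hpl, hql⟩
    obtain ⟨C, hCo, hCs⟩ := hA ({B : P → Bool | B p = A p} ∩ {B | B q = A q} ∩ {B | B l = A l})
      (((hopen p).inter (hopen q)).inter (hopen l)) ⟨⟨rfl, rfl⟩, rfl⟩
    obtain ⟨r', hr', hpr', hqr'⟩ := hCs.2 p q (by rw [hCo.1.1]; exact hp)
      (by rw [hCo.1.2]; exact hq)
    have hCl := hCs.1 l r' (hlub r' hpr' hqr') hr'
    rw [hCo.2] at hCl; exact hCl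
end

section
/- Let P be a quasi-lattice ordered submonoid of a group Q. For m ∈ P let χ_{[1,m]} : P → Bool be the characteristic function of the segment [1,m] = {p ∈ P : p ≤ m}. Then the closure of {χ_{[1,m]} : m ∈ P} in the space P → Bool (product topology, Bool discrete) is exactly the set of characteristic functions of nonempty hereditary directed subsets of P. (This identifies Nica's Wiener–Hopf compactification Ω(P), and is the discrete case Λ = P of the density of F(Λ) in the path space.) -/
/-- let `P` be a quasi-lattice ordered submonoid of a group `Q`.  For
`m ∈ P` let `χ_{[1,m]} : P → Bool` be the characteristic function of the segment
`[1,m] = {p : p ≤ m}` (where `p ≤ m ↔ ∃ s ∈ P, m = p s`).  Then the closure of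
`{χ_{[1,m]} : m ∈ P}` in `P → Bool` (product topology, `Bool` discrete) is precisely
the set of characteristic functions of the nonempty hereditary directed subsets of
`P` (Nica's Wiener–Hopf compactification `Ω(P)`). -/
theorem stmt18 {Q : Type*} [Group Q] (P : Submonoid Q)
    (hQL1 : ∀ q : Q, q ∈ P → q⁻¹ ∈ P → q = 1)
    (hQL2 : ∀ p q : P, (∃ u : P, (∃ s : P, u = p * s) ∧ (∃ s : P, u = q * s)) →
      ∃ l : P, (∃ s : P, l = p * s) ∧ (∃ s : P, l = q * s) ∧
        ∀ u : P, (∃ s : P, u = p * s) → (∃ s : P, u = q * s) → ∃ s : P, u = l * s) :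
    closure {f : P → Bool | ∃ m : P, ∀ p : P, f p = true ↔ ∃ s : P, m = p * s} =
      {f : P → Bool |
        (∃ p : P, f p = true) ∧
        (∀ p q : P, (∃ s : P, q = p * s) → f q = true → f p = true) ∧
        (∀ p q : P, f p = true → f q = true →
          ∃ r : P, f r = true ∧ (∃ s : P, r = p * s) ∧ (∃ s : P, r = q * s))} := by
  classical
  apply Set.Subset.antisymm
  · -- closure ⊆ Ω(P)
    intro f hf
    rw [mem_closure_iff] at hf
    have key : ∀ I : Finset P, ∃ m : P,
        ∀ p ∈ I, ((∃ s : P, m = p * s) ↔ f p = true) := by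
      intro I
      have hopen : IsOpen ((I : Set P).pi fun p => ({f p} : Set Bool)) :=
        isOpen_set_pi I.finite_toSet (fun i _ => isOpen_discrete _)
      have hmem : f ∈ (I : Set P).pi fun p => ({f p} : Set Bool) := fun i _ => rfl
      obtain ⟨g, hgo, m, hm⟩ := hf _ hopen hmem
      refine ⟨m, fun p hp => ?_⟩
      have hgp : g p = f p := hgo p hp
      rw [← hgp]
      exact (hm p).symm
    refine ⟨?_, ?_, ?_⟩
    · obtain ⟨m, hm⟩ := key {1}
      exact ⟨1, (hm 1 (Finset.mem_singleton_self 1)).mp ⟨m, (one_mul m).symm⟩⟩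
    · rintro p q ⟨s, hs⟩ hq
      obtain ⟨m, hm⟩ := key {p, q}
      obtain ⟨t, ht⟩ := (hm q (by simp)).mpr hq
      exact (hm p (by simp)).mp ⟨s * t, by rw [ht, hs, mul_assoc]⟩
    · intro p q hp hq
      obtain ⟨m, hm⟩ := key {p, q}
      have hpm := (hm p (by simp)).mpr hp
      have hqm := (hm q (by simp)).mpr hq
      obtain ⟨l, hlp, hlq, hlub⟩ := hQL2 p q ⟨m, hpm, hqm⟩
      obtain ⟨m', hm'⟩ := key {p, q, l}
      have hpm' := (hm' p (by simp)).mpr hp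
      have hqm' := (hm' q (by simp)).mpr hq
      have hlm' := hlub m' hpm' hqm'
      exact ⟨l, (hm' l (by simp)).mp hlm', hlp, hlq⟩
  · -- Ω(P) ⊆ closure
    rintro f ⟨⟨p₀, hp₀⟩, hher, hdir⟩
    rw [mem_closure_iff]
    intro o ho hfo
    obtain ⟨I, u, h1, h2⟩ := isOpen_pi_iff.mp ho f hfo
    have chain : ∀ J : Finset P, ∃ m : P, f m = true ∧
        ∀ p ∈ J, f p = true → ∃ s : P, m = p * s := by
      intro J
      induction J using Finset.induction_on with
      | empty => exact ⟨p₀, hp₀, by simp⟩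
      | insert _ _ hnot ih =>
        rename_i a J
        obtain ⟨m, hm, hJ⟩ := ih
        by_cases ha : f a = true
        · obtain ⟨r, hr, hra, ⟨t, ht⟩⟩ := hdir a m ha hm
          refine ⟨r, hr, fun p hp hfp => ?_⟩
          rcases Finset.mem_insert.mp hp with rfl | hp
          · exact hra
          · obtain ⟨s, hs⟩ := hJ p hp hfp
            exact ⟨s * t, by rw [ht, hs, mul_assoc]⟩
        · refine ⟨m, hm, fun p hp hfp => ?_⟩
          rcases Finset.mem_insert.mp hp with rfl | hp
          · exact absurd hfp ha
          · exact hJ p hp hfp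
    obtain ⟨m, hm, hmI⟩ := chain I
    set g : P → Bool := fun p => decide (∃ s : P, m = p * s) with hg
    have hgf : ∀ p ∈ I, g p = f p := by
      intro p hp
      by_cases hfp : f p = true
      · simp only [hg, decide_eq_true_iff]
        rw [hfp, decide_eq_true_iff]
        exact hmI p hp hfp
      · have : ¬ ∃ s : P, m = p * s := fun h => hfp (hher p m h hm)
        simp only [hg]
        rw [decide_eq_false this, eq_comm, Bool.eq_false_iff]
        intro h; exact hfp h
    refine ⟨g, h2 fun i hi => ?_, m, fun p => by simp [hg]⟩
    rw [hgf i hi]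
    exact (h1 i hi).2
end

section
/- Suppose the partial action (X,P,T) is directed. Let Λ = X*P = {(x,n) ∈ X × P : x ∈ U(n)} with the prefix order (x,m) ≤ (y,n) iff x = y and there exists p ∈ P with n = mp. Then for every x ∈ X the set J(x) := {(x,n) : x ∈ U(n)} is hereditary ((z,m) ≤ (y,n) ∈ J(x) implies (z,m) ∈ J(x)) and directed (any two elements of J(x) have a common upper bound in J(x)), and the map x ↦ J(x) is injective. -/
/-- The prefix order on `Λ = X*P = {(x,n) : x ∈ U n}`:
`(x,m) ≤ (y,n)` iff `x = y` and `n = m·p` for some `p ∈ P`. -/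
def lamLe {P : Type*} [Monoid P] {X : Type*} (a b : X × P) : Prop :=
  a.1 = b.1 ∧ ∃ p : P, b.2 = a.2 * p

/-- suppose the partial action `(X,P,T)` is directed.  For `x ∈ X` let
`J x = {(x,n) : x ∈ U n} ⊆ Λ = X*P`.  Then each `J x` is hereditary and directed for
the prefix order, and `x ↦ J x` is injective. -/
theorem stmt19 {P : Type*} [Monoid P] {X : Type*} (A : PartialAction P X)
    (hdir : A.IsDirectedAction) :
    (∀ x : X, ∀ a b : X × P, lamLe a b →
        b ∈ {c : X × P | c.1 = x ∧ x ∈ A.U c.2} →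
        a ∈ {c : X × P | c.1 = x ∧ x ∈ A.U c.2}) ∧
    (∀ x : X, ∀ a ∈ {c : X × P | c.1 = x ∧ x ∈ A.U c.2},
        ∀ b ∈ {c : X × P | c.1 = x ∧ x ∈ A.U c.2},
        ∃ c ∈ {c : X × P | c.1 = x ∧ x ∈ A.U c.2}, lamLe a c ∧ lamLe b c) ∧
    (Function.Injective fun x : X => {c : X × P | c.1 = x ∧ x ∈ A.U c.2}) := by
  refine ⟨?_, ?_, ?_⟩
  · rintro x a b ⟨hab, p, hp⟩ ⟨hb1, hb2⟩
    refine ⟨hab.trans hb1, ?_⟩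
    rw [hp, A.mem_U_mul] at hb2
    exact hb2.1
  · rintro x a ⟨ha1, ha2⟩ b ⟨hb1, hb2⟩
    obtain ⟨r, hmr, hnr, hU⟩ := hdir a.2 b.2 ⟨x, ha2, hb2⟩
    refine ⟨(x, r), ⟨rfl, ?_⟩, ⟨ha1, hmr⟩, ⟨hb1, hnr⟩⟩
    rw [← hU]; exact ⟨ha2, hb2⟩
  · intro x y h
    have hx : (x, (1:P)) ∈ {c : X × P | c.1 = x ∧ x ∈ A.U c.2} := by
      simp [A.U_one]
    have := (Set.ext_iff.mp h (x, 1)).1 hx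
    exact this.1
end
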